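/- Suppose S₂ := zer(F₂+∂g₂) is nonempty and (α,ρ)-weakly sharp as solution set of HVI(F₂,g₂), with α > 0 and ρ > 1. Then for every z ∈ S₂, every p* ∈ Z with σ(p* | S₂) < ∞, and every σ > 0: φ^{(F₂,g₂)}(z, σp*) − σ(σp* | S₂) ≤ α^{−1/(ρ−1)}·((ρ−1)/ρ)·σ^{ρ/(ρ−1)}·‖p*‖^{ρ/(ρ−1)}. -/

import Mathlib

noncomputable section

open scoped RealInnerProductSpace
open Filter Topology

variable {Z : Type*} [NormedAddCommGroup Z] [InnerProductSpace ℝ Z] [CompleteSpace Z]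

/-- Effective domain of an extended-real-valued function. -/
def edom {Z : Type*} (g : Z → EReal) : Set Z := {z | g z < ⊤}

/-- `g` is proper, convex and lower semicontinuous. -/
structure ProperConvexLsc (g : Z → EReal) : Prop where
  ne_bot : ∀ z, g z ≠ ⊥
  proper : ∃ z, g z < ⊤
  convex : ∀ x y : Z, ∀ a b : ℝ, 0 ≤ a → 0 ≤ b → a + b = 1 →
    g (a • x + b • y) ≤ (a : EReal) * g x + (b : EReal) * g y
  lsc : LowerSemicontinuous g

/-- Monotonicity of an operator on a real Hilbert space. -/
def IsMonotoneOp (F : Z → Z) : Prop := ∀ x y : Z, 0 ≤ ⟪F x - F y, x - y⟫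

/-- Lipschitz continuity with (real) constant `L`. -/
def IsLipOp (L : ℝ) (F : Z → Z) : Prop := ∀ x y : Z, ‖F x - F y‖ ≤ L * ‖x - y‖

/-- The bifunction `H^{(F,g)}(z,y) = ⟪F y, z - y⟫ + g z - g y`. -/
def Hb (F : Z → Z) (g : Z → EReal) (z y : Z) : EReal :=
  ((⟪F y, z - y⟫ : ℝ) : EReal) + g z - g y

/-- The localized dual gap function `Θ(z | F,g,C)`. -/
def gapFn (F : Z → Z) (g : Z → EReal) (C : Set Z) (z : Z) : EReal :=
  ⨆ y ∈ C, Hb F g z y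

/-- The convex subdifferential of an extended-real-valued function. -/
def subdiff (g : Z → EReal) (x : Z) : Set Z :=
  {ξ : Z | ∀ y : Z, ((⟪ξ, y - x⟫ : ℝ) : EReal) + g x ≤ g y}

/-- The solution set `zer(F + ∂g)`. -/
def zerFg (F : Z → Z) (g : Z → EReal) : Set Z := {z : Z | -F z ∈ subdiff g z}

/-- The normal cone to a set `C` at `z`. -/
def normalCone (C : Set Z) (z : Z) : Set Z :=
  {ξ : Z | z ∈ C ∧ ∀ z' ∈ C, ⟪ξ, z' - z⟫ ≤ 0}

/-- The solution set `zer(F + ∂g + N_C)`. -/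
def zerFgN (F : Z → Z) (g : Z → EReal) (C : Set Z) : Set Z :=
  {z : Z | ∃ ξ ∈ subdiff g z, ∃ p ∈ normalCone C z, F z + ξ + p = 0}

/-- The solution set `S₁` of problem (P): points of `S₂` solving the upper HVI over `S₂`. -/
def solP (F₁ : Z → Z) (g₁ : Z → EReal) (S₂ : Set Z) : Set Z :=
  {zs : Z | zs ∈ S₂ ∧ ∀ u ∈ S₂, 0 ≤ Hb F₁ g₁ u zs}

/-- `(α,ρ)`-weak sharpness of the solution set `S` of `HVI(F,g)`. -/
def WeakSharp (F : Z → Z) (g : Z → EReal) (S : Set Z) (α ρ : ℝ) : Prop :=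
  ∀ zs ∈ S, ∀ z ∈ edom g,
    (((α / ρ) * Metric.infDist z S ^ ρ : ℝ) : EReal) ≤ Hb F g z zs

/-- Support function of a set. -/
def suppFn (p : Z) (C : Set Z) : EReal := ⨆ z ∈ C, ((⟪p, z⟫ : ℝ) : EReal)

/-- The Fitzpatrick-type function `φ^{(F,g)}(z,u)`. -/
def phiFn (F : Z → Z) (g : Z → EReal) (z u : Z) : EReal :=
  ⨆ y ∈ edom g, (Hb F g z y + ((⟪y, u⟫ : ℝ) : EReal))

/-- `x = prox_{τ G}(u)`, via the variational characterization
`⟪u - x, v - x⟫ ≤ τ (G v - G x)` for all `v`. -/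
def IsProx (τ : ℝ) (G : Z → EReal) (u x : Z) : Prop :=
  ∀ v : Z, ((⟪u - x, v - x⟫ : ℝ) : EReal) ≤ (τ : EReal) * (G v - G x)

/-- The Tikhonov-regularized operator `V_k = F₂ + σ_k F₁`. -/
def Vop (F₁ F₂ : Z → Z) (σ : ℕ → ℝ) (k : ℕ) (x : Z) : Z := F₂ x + σ k • F₁ x

/-- The Tikhonov-regularized function `G_k = g₂ + σ_k g₁`. -/
def Gfun (g₁ g₂ : Z → EReal) (σ : ℕ → ℝ) (k : ℕ) (v : Z) : EReal :=
  g₂ v + ((σ k : ℝ) : EReal) * g₁ v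

/-- The Attouch–Czarnecki summability condition. -/
def ACcond (F₂ : Z → Z) (g₂ : Z → EReal) (S₂ : Set Z) (t σ : ℕ → ℝ) : Prop :=
  ∀ p : Z, (∃ zs : Z, p ∈ normalCone S₂ zs) →
    ∃ M : ℝ, ∀ K : ℕ,
      (∑ k ∈ Finset.Icc 1 K,
        ((t k : ℝ) : EReal) * ((⨆ zs ∈ S₂, phiFn F₂ g₂ zs (σ k • p)) - suppFn (σ k • p) S₂))
        ≤ (M : EReal)

/-- `T_K = ∑_{k=1}^K t_k`. -/
def Tsum (t : ℕ → ℝ) (K : ℕ) : ℝ := ∑ k ∈ Finset.Icc 1 K, t k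

/-- The ergodic average `z̄^K` (here `w k` plays the role of `z^{k+1/2}`). -/
def zbar (t : ℕ → ℝ) (w : ℕ → Z) (K : ℕ) : Z :=
  (Tsum t K)⁻¹ • ∑ k ∈ Finset.Icc 1 K, t k • w k

/-- Weights `γ_k = 1/∏_{i=1}^k (1 - t_i σ_i μ)` (so `γ_0 = 1`). -/
def gammaW (t σ : ℕ → ℝ) (μ : ℝ) (k : ℕ) : ℝ :=
  (∏ i ∈ Finset.Icc 1 k, (1 - t i * σ i * μ))⁻¹

/-- The weighted ergodic average used in the strongly monotone case. -/
def zbarW (t σ : ℕ → ℝ) (μ : ℝ) (w : ℕ → Z) (K : ℕ) : Z :=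
  (∑ i ∈ Finset.Icc 1 K, t i * σ i * gammaW t σ μ i)⁻¹ •
    ∑ i ∈ Finset.Icc 1 K, (t i * σ i * gammaW t σ μ i) • w i

/-- Convex tangent cone `T_C(x) = cl(⋃_{λ>0} (C - x)/λ)`. -/
def tangentConeCvx (C : Set Z) (x : Z) : Set Z :=
  closure {v : Z | ∃ lam : ℝ, 0 < lam ∧ ∃ c ∈ C, v = lam⁻¹ • (c - x)}

/-- Polar cone of a set. -/
def polarCone (K : Set Z) : Set Z := {z : Z | ∀ x ∈ K, ⟪z, x⟫ ≤ 0}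

/-- under `(α,ρ)`-weak sharpness of `S₂` with `ρ > 1`, the regularized
Fitzpatrick-type gap is bounded by `α^{-1/(ρ-1)}·((ρ-1)/ρ)·σ^{ρ/(ρ-1)}·‖p*‖^{ρ/(ρ-1)}`. -/
theorem phi_minus_support_bound
    (F₂ : Z → Z) (LF₂ : ℝ) (g₂ : Z → EReal)
    (hF₂m : IsMonotoneOp F₂) (hF₂L : IsLipOp LF₂ F₂)
    (hg₂ : ProperConvexLsc g₂)
    (hS₂ne : (zerFg F₂ g₂).Nonempty)
    (α ρ : ℝ) (hα : 0 < α) (hρ : 1 < ρ)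
    (hws : WeakSharp F₂ g₂ (zerFg F₂ g₂) α ρ) :
    ∀ z ∈ zerFg F₂ g₂, ∀ p : Z, suppFn p (zerFg F₂ g₂) < ⊤ → ∀ σ : ℝ, 0 < σ →
      phiFn F₂ g₂ z (σ • p) - suppFn (σ • p) (zerFg F₂ g₂) ≤
        ((α ^ (-(1 / (ρ - 1))) * ((ρ - 1) / ρ) * σ ^ (ρ / (ρ - 1)) *
          ‖p‖ ^ (ρ / (ρ - 1)) : ℝ) : EReal) := by
  intro z hz p hp σ hσ
  have hρ0 : (0:ℝ) < ρ := lt_trans one_pos hρ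
  have hρ1 : (0:ℝ) < ρ - 1 := by linarith
  set S : Set Z := zerFg F₂ g₂ with hSdef
  obtain ⟨z₀, hz₀⟩ := hS₂ne
  -- finiteness of g₂ at points of S
  have hfin : ∀ w ∈ S, g₂ w ≠ ⊤ := by
    intro w hw htop
    obtain ⟨v₀, hv₀⟩ := hg₂.proper
    have h1 := hw v₀
    rw [htop, EReal.coe_add_top] at h1
    exact hv₀.ne (top_le_iff.mp h1)
  have hgz_ne_top : g₂ z ≠ ⊤ := hfin z hz
  set gz : ℝ := (g₂ z).toReal with hgzdef
  have hgz : g₂ z = (gz : EReal) := (EReal.coe_toReal hgz_ne_top (hg₂.ne_bot z)).symm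
  -- support function bounds
  set s : EReal := suppFn (σ • p) S with hs_def
  have hs_lb : ((⟪σ • p, z₀⟫ : ℝ) : EReal) ≤ s :=
    le_iSup₂ (f := fun z' (_ : z' ∈ S) => ((⟪σ • p, z'⟫ : ℝ) : EReal)) z₀ hz₀
  have hs_ne_bot : s ≠ ⊥ := fun h => by simp [h] at hs_lb
  have hMle : ∀ w ∈ S, ⟪p, w⟫ ≤ (suppFn p S).toReal := by
    intro w hw
    have h1 : ((⟪p, w⟫ : ℝ) : EReal) ≤ suppFn p S :=
      le_iSup₂ (f := fun z' (_ : z' ∈ S) => ((⟪p, z'⟫ : ℝ) : EReal)) w hw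
    have hne_bot : suppFn p S ≠ ⊥ := fun h => by simp [h] at h1
    rw [← EReal.coe_toReal hp.ne hne_bot] at h1
    exact_mod_cast h1
  have hs_ne_top : s ≠ ⊤ := by
    have : s ≤ ((σ * (suppFn p S).toReal : ℝ) : EReal) := by
      refine iSup₂_le fun w hw => ?_
      have : ⟪σ • p, w⟫ = σ * ⟪p, w⟫ := real_inner_smul_left p w σ
      rw [this]
      exact_mod_cast mul_le_mul_of_nonneg_left (hMle w hw) hσ.le
    intro h
    rw [h, top_le_iff] at this
    exact EReal.coe_ne_top _ this
  set sr : ℝ := s.toReal with hsrdef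
  have hs : s = (sr : EReal) := (EReal.coe_toReal hs_ne_top hs_ne_bot).symm
  have hsr_ub : ∀ w ∈ S, ⟪σ • p, w⟫ ≤ sr := by
    intro w hw
    have h1 : ((⟪σ • p, w⟫ : ℝ) : EReal) ≤ s :=
      le_iSup₂ (f := fun z' (_ : z' ∈ S) => ((⟪σ • p, z'⟫ : ℝ) : EReal)) w hw
    rw [hs] at h1; exact_mod_cast h1
  set B : ℝ := α ^ (-(1 / (ρ - 1))) * ((ρ - 1) / ρ) * σ ^ (ρ / (ρ - 1)) *
      ‖p‖ ^ (ρ / (ρ - 1)) with hBdef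
  rw [EReal.sub_le_iff_le_add (Or.inl hs_ne_bot) (Or.inl hs_ne_top), hs,
    ← EReal.coe_add]
  refine iSup₂_le fun y hy => ?_
  have hgy_ne_top : g₂ y ≠ ⊤ := LT.lt.ne hy
  set gy : ℝ := (g₂ y).toReal with hgydef
  have hgy : g₂ y = (gy : EReal) := (EReal.coe_toReal hgy_ne_top (hg₂.ne_bot y)).symm
  set d : ℝ := Metric.infDist y S with hd_def
  have hd0 : 0 ≤ d := Metric.infDist_nonneg
  set c : ℝ := σ * ‖p‖ with hc_def
  have hc0 : 0 ≤ c := mul_nonneg hσ.le (norm_nonneg p)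
  -- weak sharpness, real form
  have key1 : α / ρ * d ^ ρ ≤ ⟪F₂ z, y - z⟫ + gy - gz := by
    have h1 := hws z hz y hy
    rw [show Hb F₂ g₂ y z = ((⟪F₂ z, y - z⟫ + gy - gz : ℝ) : EReal) by
      rw [Hb, hgy, hgz]; norm_cast] at h1
    exact_mod_cast h1
  -- monotonicity
  have hmono := hF₂m y z
  rw [inner_sub_left] at hmono
  have hflip : ⟪F₂ y, z - y⟫ = -⟪F₂ y, y - z⟫ := by
    rw [← neg_sub, inner_neg_right]
  have key2 : ⟪F₂ y, z - y⟫ + gz - gy ≤ -(α / ρ * d ^ ρ) := by linarith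
  -- inner product vs distance to S
  have key4 : ⟪y, σ • p⟫ - sr ≤ c * d := by
    rw [real_inner_comm]
    have hbd : ∀ w ∈ S, ⟪σ • p, y⟫ - sr ≤ c * dist y w := by
      intro w hw
      have h1 : ⟪σ • p, y - w⟫ ≤ ‖σ • p‖ * ‖y - w‖ := real_inner_le_norm _ _
      rw [inner_sub_right] at h1
      have h2 : ‖σ • p‖ = c := by
        rw [norm_smul, Real.norm_eq_abs, abs_of_pos hσ]
      rw [h2, ← dist_eq_norm] at h1
      have := hsr_ub w hw
      linarith
    rcases eq_or_lt_of_le hc0 with hc | hc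
    · have h0 := hbd z₀ hz₀
      rw [← hc] at h0 ⊢
      linarith [h0]
    · refine le_of_forall_pos_le_add fun ε hε => ?_
      have hlt : Metric.infDist y S < d + ε / c := by
        rw [← hd_def]; linarith [div_pos hε hc]
      obtain ⟨w, hw, hdw⟩ := (Metric.infDist_lt_iff ⟨z₀, hz₀⟩).mp hlt
      calc ⟪σ • p, y⟫ - sr ≤ c * dist y w := hbd w hw
        _ ≤ c * (d + ε / c) := mul_le_mul_of_nonneg_left hdw.le hc0
        _ = c * d + ε := by field_simp
  -- Young's inequality
  have key5 : c * d ≤ α / ρ * d ^ ρ + B := by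
    have hconj : ρ.HolderConjugate (ρ / (ρ - 1)) := Real.HolderConjugate.conjExponent hρ
    set q : ℝ := ρ / (ρ - 1) with hq_def
    have hq0 : (0:ℝ) < q := div_pos hρ0 hρ1
    have ha0 : (0:ℝ) ≤ α ^ (1/ρ) * d := mul_nonneg (Real.rpow_nonneg hα.le _) hd0
    have hb0 : (0:ℝ) ≤ α ^ (-(1/ρ)) * c := mul_nonneg (Real.rpow_nonneg hα.le _) hc0
    have hy := Real.young_inequality_of_nonneg ha0 hb0 hconj
    have hab : (α ^ (1/ρ) * d) * (α ^ (-(1/ρ)) * c) = c * d := by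
      have : α ^ (1/ρ) * α ^ (-(1/ρ)) = 1 := by
        rw [← Real.rpow_add hα]; simp
      calc (α ^ (1/ρ) * d) * (α ^ (-(1/ρ)) * c)
          = (α ^ (1/ρ) * α ^ (-(1/ρ))) * (c * d) := by ring
        _ = c * d := by rw [this, one_mul]
    have hap : (α ^ (1/ρ) * d) ^ ρ = α * d ^ ρ := by
      rw [Real.mul_rpow (Real.rpow_nonneg hα.le _) hd0, ← Real.rpow_mul hα.le]
      rw [one_div, inv_mul_cancel₀ hρ0.ne', Real.rpow_one]
    have hbp : (α ^ (-(1/ρ)) * c) ^ q = α ^ (-(1/(ρ-1))) * (σ ^ q * ‖p‖ ^ q) := by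
      rw [Real.mul_rpow (Real.rpow_nonneg hα.le _) hc0, ← Real.rpow_mul hα.le,
        hc_def, Real.mul_rpow hσ.le (norm_nonneg p)]
      congr 2
      rw [hq_def]; field_simp
    rw [hab, hap, hbp] at hy
    have h1q : 1 / q = (ρ - 1) / ρ := by rw [hq_def, one_div_div]
    calc c * d ≤ α * d ^ ρ / ρ + α ^ (-(1/(ρ-1))) * (σ ^ q * ‖p‖ ^ q) / q := hy
      _ = α / ρ * d ^ ρ + α ^ (-(1/(ρ-1))) * (1/q) * σ ^ q * ‖p‖ ^ q := by ring
      _ = α / ρ * d ^ ρ + B := by rw [h1q, hBdef]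
  -- combine
  have hreal : ⟪F₂ y, z - y⟫ + gz - gy + ⟪y, σ • p⟫ ≤ B + sr := by linarith
  calc Hb F₂ g₂ z y + ((⟪y, σ • p⟫ : ℝ) : EReal)
      = ((⟪F₂ y, z - y⟫ + gz - gy + ⟪y, σ • p⟫ : ℝ) : EReal) := by
        rw [Hb, hgy, hgz]; norm_cast
    _ ≤ ((B + sr : ℝ) : EReal) := EReal.coe_le_coe_iff.mpr hreal


end
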